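/- (Setting A equivalence.) Let K be an m×m and G a q×q symmetric positive definite real matrix, Y ∈ ℝ^{m×q}, and λ_d, λ_t > 0. Define the mq×mq matrix Ξ = (G ⊗ K)(λ_dλ_t I + λ_t (I ⊗ K) + λ_d (G ⊗ I))⁻¹, where ⊗ denotes the Kronecker product; Ξ is invertible. Then the functional J(F) = vec(F − Y)ᵀ vec(F − Y) + vec(F)ᵀ Ξ⁻¹ vec(F) over F ∈ ℝ^{m×q} has the unique minimizer F* = K(K + λ_d I)⁻¹ Y (G + λ_t I)⁻¹ G. -/

import Mathlib

open Matrix Kronecker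

section Aux

variable {n n' : Type*} [Fintype n] [Fintype n'] [DecidableEq n] [DecidableEq n']

omit [Fintype n] [Fintype n'] [DecidableEq n] [DecidableEq n'] in
lemma kron_transpose' (A : Matrix n n ℝ) (B : Matrix n' n' ℝ) :
    (A ⊗ₖ B)ᵀ = Aᵀ ⊗ₖ Bᵀ := by
  ext ⟨i,j⟩ ⟨k,l⟩; simp [kroneckerMap, transpose_apply]

omit [Fintype n] [DecidableEq n] in
lemma sym_eq' {M : Matrix n n ℝ} (h : M.IsHermitian) : Mᵀ = M := by
  rw [← conjTranspose_eq_transpose_of_trivial, h.eq]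

omit [DecidableEq n] in
lemma psd_smul' {M : Matrix n n ℝ} (hM : M.PosSemidef) {c : ℝ} (hc : 0 ≤ c) :
    (c • M).PosSemidef := by
  refine Matrix.PosSemidef.of_dotProduct_mulVec_nonneg ?_ fun x => ?_
  · unfold Matrix.IsHermitian
    rw [conjTranspose_smul, hM.1.eq]; norm_num
  · rw [smul_mulVec, dotProduct_smul]
    exact mul_nonneg hc (hM.dotProduct_mulVec_nonneg x)

lemma pd_smul_one' {c : ℝ} (hc : 0 < c) : ((c • 1 : Matrix n n ℝ)).PosDef := by
  have h : (c • 1 : Matrix n n ℝ) = diagonal (fun _ => c) := by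
    ext i j
    by_cases hij : i = j <;> simp [Matrix.one_apply, diagonal_apply, hij]
  rw [h]
  exact posDef_diagonal_iff.mpr fun _ => hc

lemma psd_kron' {A : Matrix n n ℝ} {B : Matrix n' n' ℝ}
    (hA : A.PosSemidef) (hB : B.PosSemidef) : (A ⊗ₖ B).PosSemidef := by
  exact hA.kronecker hB

lemma posdef_of_psd_det' {M : Matrix n n ℝ} (hM : M.PosSemidef) (hd : M.det ≠ 0) :
    M.PosDef := by
  refine Matrix.PosDef.of_dotProduct_mulVec_pos hM.1 fun x hx => ?_
  rcases lt_or_eq_of_le (hM.dotProduct_mulVec_nonneg x) with h | h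
  · exact h
  · exfalso
    have hMx : M *ᵥ x = 0 := (hM.dotProduct_mulVec_zero_iff x).mp h.symm
    have : x = 0 := by
      have := congrArg (fun v => M⁻¹ *ᵥ v) hMx
      simpa [mulVec_mulVec, nonsing_inv_mul M (isUnit_iff_ne_zero.2 hd)] using this
    exact hx this

lemma pd_kron' {A : Matrix n n ℝ} {B : Matrix n' n' ℝ}
    (hA : A.PosDef) (hB : B.PosDef) : (A ⊗ₖ B).PosDef := by
  refine posdef_of_psd_det' (psd_kron' hA.posSemidef hB.posSemidef) ?_
  rw [det_kronecker]
  have h1 := hA.det_pos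
  have h2 := hB.det_pos
  positivity

lemma vecCols_mul' {m q : ℕ} (A : Matrix (Fin m) (Fin m) ℝ) (X : Matrix (Fin m) (Fin q) ℝ)
    (B : Matrix (Fin q) (Fin q) ℝ) :
    (fun p : Fin q × Fin m => (A * X * B) p.2 p.1)
      = (Bᵀ ⊗ₖ A) *ᵥ (fun p : Fin q × Fin m => X p.2 p.1) := by
  funext ⟨j, i⟩
  show (A * X * B) i j = _
  simp only [Matrix.mulVec, dotProduct, Matrix.mul_apply, kroneckerMap_apply,
    transpose_apply, Fintype.sum_prod_type, Finset.sum_mul]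
  exact Finset.sum_congr rfl fun l _ => Finset.sum_congr rfl fun k _ => by ring

end Aux

/-- `vec` stacks the columns of a matrix into a single (column) vector, so that
`vec (M * X * N) = (Nᵀ ⊗ M) *ᵥ vec X`. -/
def vecCols {m q : ℕ} (X : Matrix (Fin m) (Fin q) ℝ) : Fin q × Fin m → ℝ :=
  fun p => X p.2 p.1

/-- Setting A equivalence: with
`Ξ = (G ⊗ K)(λ_dλ_t I + λ_t (I ⊗ K) + λ_d (G ⊗ I))⁻¹` (which is invertible),
the functional `J(F) = vec(F − Y)ᵀ vec(F − Y) + vec(F)ᵀ Ξ⁻¹ vec(F)` has the unique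
minimizer `F* = K(K + λ_d I)⁻¹ Y (G + λ_t I)⁻¹ G`. -/
theorem two_step_krr_stmt3 {m q : ℕ}
    (K : Matrix (Fin m) (Fin m) ℝ) (hK : K.PosDef)
    (G : Matrix (Fin q) (Fin q) ℝ) (hG : G.PosDef)
    (Y : Matrix (Fin m) (Fin q) ℝ) (ld lt : ℝ) (hld : 0 < ld) (hlt : 0 < lt)
    (Ξ : Matrix (Fin q × Fin m) (Fin q × Fin m) ℝ)
    (hΞ : Ξ = (G ⊗ₖ K) *
      ((ld * lt) • 1 + lt • ((1 : Matrix (Fin q) (Fin q) ℝ) ⊗ₖ K)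
        + ld • (G ⊗ₖ (1 : Matrix (Fin m) (Fin m) ℝ)))⁻¹)
    (J : Matrix (Fin m) (Fin q) ℝ → ℝ)
    (hJ : ∀ F, J F = vecCols (F - Y) ⬝ᵥ vecCols (F - Y)
        + vecCols F ⬝ᵥ (Ξ⁻¹ *ᵥ vecCols F))
    (Fstar : Matrix (Fin m) (Fin q) ℝ)
    (hFstar : Fstar = K * (K + ld • 1)⁻¹ * Y * ((G + lt • 1)⁻¹ * G)) :
    IsUnit Ξ.det ∧ (∀ F, F ≠ Fstar → J Fstar < J F) := by
  set B : Matrix (Fin q × Fin m) (Fin q × Fin m) ℝ :=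
    (ld * lt) • 1 + lt • ((1 : Matrix (Fin q) (Fin q) ℝ) ⊗ₖ K)
      + ld • (G ⊗ₖ (1 : Matrix (Fin m) (Fin m) ℝ)) with hBdef
  set Kd : Matrix (Fin m) (Fin m) ℝ := K + ld • 1 with hKddef
  set Gt : Matrix (Fin q) (Fin q) ℝ := G + lt • 1 with hGtdef
  -- positive definiteness facts
  have hB_pd : B.PosDef :=
    ((pd_smul_one' (mul_pos hld hlt)).add_posSemidef
        (psd_smul' (psd_kron' Matrix.PosSemidef.one hK.posSemidef) hlt.le)).add_posSemidef
      (psd_smul' (psd_kron' hG.posSemidef Matrix.PosSemidef.one) hld.le)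
  have hKd_pd : Kd.PosDef := hK.add_posSemidef (psd_smul' Matrix.PosSemidef.one hld.le)
  have hGt_pd : Gt.PosDef := hG.add_posSemidef (psd_smul' Matrix.PosSemidef.one hlt.le)
  have hGK_pd : (G ⊗ₖ K).PosDef := pd_kron' hG hK
  have hKu : IsUnit K.det := isUnit_iff_ne_zero.2 hK.det_pos.ne'
  have hGu : IsUnit G.det := isUnit_iff_ne_zero.2 hG.det_pos.ne'
  have hKdu : IsUnit Kd.det := isUnit_iff_ne_zero.2 hKd_pd.det_pos.ne'
  have hGtu : IsUnit Gt.det := isUnit_iff_ne_zero.2 hGt_pd.det_pos.ne'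
  have hBu : IsUnit B.det := isUnit_iff_ne_zero.2 hB_pd.det_pos.ne'
  have hGKu : IsUnit (G ⊗ₖ K).det := isUnit_iff_ne_zero.2 hGK_pd.det_pos.ne'
  -- the matrix M = (Gt G⁻¹) ⊗ (Kd K⁻¹)
  set M : Matrix (Fin q × Fin m) (Fin q × Fin m) ℝ := (Gt * G⁻¹) ⊗ₖ (Kd * K⁻¹) with hMdef
  have hP_pd : (Gt * G⁻¹).PosDef := by
    have h : Gt * G⁻¹ = 1 + lt • G⁻¹ := by
      rw [hGtdef, add_mul, mul_nonsing_inv _ hGu, smul_mul_assoc, one_mul]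
    rw [h]
    exact Matrix.PosDef.one.add_posSemidef (psd_smul' hG.inv.posSemidef hlt.le)
  have hQ_pd : (Kd * K⁻¹).PosDef := by
    have h : Kd * K⁻¹ = 1 + ld • K⁻¹ := by
      rw [hKddef, add_mul, mul_nonsing_inv _ hKu, smul_mul_assoc, one_mul]
    rw [h]
    exact Matrix.PosDef.one.add_posSemidef (psd_smul' hK.inv.posSemidef hld.le)
  have hM_pd : M.PosDef := pd_kron' hP_pd hQ_pd
  -- Kronecker expansion: Gt ⊗ Kd = G ⊗ K + B
  have hexp : Gt ⊗ₖ Kd = G ⊗ₖ K + B := by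
    rw [hGtdef, hKddef, hBdef]
    simp only [add_kronecker, kronecker_add, smul_kronecker, kronecker_smul,
      one_kronecker_one, smul_add, smul_smul]
    abel
  -- M - 1 = B (G ⊗ K)⁻¹
  have hM1 : M - 1 = B * (G ⊗ₖ K)⁻¹ := by
    rw [hMdef, mul_kronecker_mul, hexp, ← inv_kronecker, add_mul,
      mul_nonsing_inv _ hGKu, add_sub_cancel_left]
  -- Ξ is invertible with inverse M - 1
  have hright : Ξ * (M - 1) = 1 := by
    rw [hΞ, hM1, Matrix.mul_assoc, ← Matrix.mul_assoc _ B _,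
      nonsing_inv_mul _ hBu, Matrix.one_mul, mul_nonsing_inv _ hGKu]
  have hΞu : IsUnit Ξ.det := Matrix.isUnit_det_of_right_inverse hright
  have hΞinv : Ξ⁻¹ = M - 1 := Matrix.inv_eq_right_inv hright
  refine ⟨hΞu, fun F hF => ?_⟩
  set y : Fin q × Fin m → ℝ := vecCols Y with hy
  set v : Fin q × Fin m → ℝ := vecCols F with hv
  set v0 : Fin q × Fin m → ℝ := vecCols Fstar with hv0
  -- M *ᵥ v0 = y
  have hMv0 : M *ᵥ v0 = y := by
    have halg : Kd * K⁻¹ * Fstar * (G⁻¹ * Gt) = Y := by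
      rw [hFstar]
      simp only [← Matrix.mul_assoc]
      rw [Matrix.mul_assoc Kd K⁻¹ K, nonsing_inv_mul _ hKu, Matrix.mul_one,
        mul_nonsing_inv _ hKdu, Matrix.one_mul,
        Matrix.mul_assoc (Y * Gt⁻¹) G G⁻¹, mul_nonsing_inv _ hGu, Matrix.mul_one,
        Matrix.mul_assoc Y Gt⁻¹ Gt, nonsing_inv_mul _ hGtu, Matrix.mul_one]
    calc M *ᵥ v0 = ((G⁻¹ * Gt)ᵀ ⊗ₖ (Kd * K⁻¹)) *ᵥ vecCols Fstar := by
          rw [hMdef]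
          congr 2
          rw [transpose_mul, transpose_nonsing_inv, sym_eq' hG.isHermitian,
            sym_eq' hGt_pd.isHermitian]
      _ = vecCols (Kd * K⁻¹ * Fstar * (G⁻¹ * Gt)) := (vecCols_mul' _ _ _).symm
      _ = y := by rw [halg]
  -- symmetry of M
  have hsymm : ∀ a b : Fin q × Fin m → ℝ, a ⬝ᵥ (M *ᵥ b) = b ⬝ᵥ (M *ᵥ a) := by
    intro a b
    rw [dotProduct_mulVec, ← Matrix.mulVec_transpose, sym_eq' hM_pd.isHermitian,
      dotProduct_comm]
  -- v - v0 ≠ 0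
  have hdne : v - v0 ≠ 0 := by
    intro h
    apply hF
    have hveq : v = v0 := sub_eq_zero.mp h
    ext i j
    exact congrFun hveq (j, i)
  have hpos : 0 < (v - v0) ⬝ᵥ (M *ᵥ (v - v0)) := by
    have := hM_pd.dotProduct_mulVec_pos hdne
    simpa using this
  -- expansion of J
  have hJexp : ∀ X : Matrix (Fin m) (Fin q) ℝ,
      J X = vecCols X ⬝ᵥ (M *ᵥ vecCols X) - 2 * (y ⬝ᵥ vecCols X) + y ⬝ᵥ y := by
    intro X
    have hsubX : vecCols (X - Y) = vecCols X - y := by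
      funext p; simp [vecCols, Matrix.sub_apply, hy]
    rw [hJ X, hΞinv, hsubX]
    simp only [Matrix.sub_mulVec, dotProduct_sub, sub_dotProduct, Matrix.one_mulVec,
      dotProduct_comm (vecCols X) y]
    ring
  have hkey : (v - v0) ⬝ᵥ (M *ᵥ (v - v0))
      = v ⬝ᵥ (M *ᵥ v) - 2 * (v ⬝ᵥ (M *ᵥ v0)) + v0 ⬝ᵥ (M *ᵥ v0) := by
    simp only [Matrix.mulVec_sub, dotProduct_sub, sub_dotProduct, hsymm v0 v]
    ring
  have h1 : y ⬝ᵥ v = v ⬝ᵥ (M *ᵥ v0) := by rw [← hMv0, dotProduct_comm]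
  have h2 : y ⬝ᵥ v0 = v0 ⬝ᵥ (M *ᵥ v0) := by rw [← hMv0, dotProduct_comm]
  have hJF := hJexp F
  have hJFs := hJexp Fstar
  rw [← hv] at hJF
  rw [← hv0] at hJFs
  linarith [hpos, hkey]
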